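/- Let α₁,α₂,α₃,ε ∈ ℝ and let (x₁,x₂,x₃,x̃₁,x̃₂,x̃₃) ∈ ℝ⁶ satisfy the dET equations x̃_i − x_i = εα_i(x̃_j x_k + x_j x̃_k) for all cyclic permutations (i,j,k) of (1,2,3), and assume 1 − ε²α_jα_k x_i² ≠ 0 for each i. Set H_i(ε) = (α_j x_k² − α_k x_j²)/(1 − ε²α_jα_k x_i²). Then for each cyclic permutation (i,j,k) of (1,2,3) the pair (x_i, x̃_i) satisfies the biquadratic relation −4ε²α_jα_k · x_i²x̃_i² + (1 + ε²α_j H_j(ε))(1 − ε²α_k H_k(ε)) · (x_i² + x̃_i²) − 2(1 − ε²α_j H_j(ε))(1 + ε²α_k H_k(ε)) · x_i x̃_i + 4ε² H_j(ε) H_k(ε) = 0. -/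

import Mathlib

set_option maxHeartbeats 1600000


/-- Each pair `(xᵢ, x̃ᵢ)` of the Hirota–Kimura discretization dET of the Euler
top lies on a biquadratic curve whose coefficients are expressed through the
conserved quantities `Hᵢ(ε)`. -/
theorem dET_biquadratic (a1 a2 a3 ε x1 x2 x3 xt1 xt2 xt3 H1 H2 H3 : ℝ)
    (h1 : xt1 - x1 = ε * a1 * (xt2 * x3 + x2 * xt3))
    (h2 : xt2 - x2 = ε * a2 * (xt3 * x1 + x3 * xt1))
    (h3 : xt3 - x3 = ε * a3 * (xt1 * x2 + x1 * xt2))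
    (hd1 : 1 - ε ^ 2 * a2 * a3 * x1 ^ 2 ≠ 0)
    (hd2 : 1 - ε ^ 2 * a3 * a1 * x2 ^ 2 ≠ 0)
    (hd3 : 1 - ε ^ 2 * a1 * a2 * x3 ^ 2 ≠ 0)
    (hH1 : H1 = (a2 * x3 ^ 2 - a3 * x2 ^ 2) / (1 - ε ^ 2 * a2 * a3 * x1 ^ 2))
    (hH2 : H2 = (a3 * x1 ^ 2 - a1 * x3 ^ 2) / (1 - ε ^ 2 * a3 * a1 * x2 ^ 2))
    (hH3 : H3 = (a1 * x2 ^ 2 - a2 * x1 ^ 2) / (1 - ε ^ 2 * a1 * a2 * x3 ^ 2)) :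
    (-(4 * ε ^ 2 * a2 * a3) * (x1 ^ 2 * xt1 ^ 2)
      + (1 + ε ^ 2 * a2 * H2) * (1 - ε ^ 2 * a3 * H3) * (x1 ^ 2 + xt1 ^ 2)
      - 2 * (1 - ε ^ 2 * a2 * H2) * (1 + ε ^ 2 * a3 * H3) * (x1 * xt1)
      + 4 * ε ^ 2 * H2 * H3 = 0) ∧
    (-(4 * ε ^ 2 * a3 * a1) * (x2 ^ 2 * xt2 ^ 2)
      + (1 + ε ^ 2 * a3 * H3) * (1 - ε ^ 2 * a1 * H1) * (x2 ^ 2 + xt2 ^ 2)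
      - 2 * (1 - ε ^ 2 * a3 * H3) * (1 + ε ^ 2 * a1 * H1) * (x2 * xt2)
      + 4 * ε ^ 2 * H3 * H1 = 0) ∧
    (-(4 * ε ^ 2 * a1 * a2) * (x3 ^ 2 * xt3 ^ 2)
      + (1 + ε ^ 2 * a1 * H1) * (1 - ε ^ 2 * a2 * H2) * (x3 ^ 2 + xt3 ^ 2)
      - 2 * (1 - ε ^ 2 * a1 * H1) * (1 + ε ^ 2 * a2 * H2) * (x3 * xt3)
      + 4 * ε ^ 2 * H1 * H2 = 0) := by
  have hR1 : (1 - ε^2*(a2*a3*x1^2 + a3*a1*x2^2 + a1*a2*x3^2) - 2*ε^3*a1*a2*a3*x1*x2*x3) * xt1 - (x1 - ε^2*a2*a3*x1^3 + 2*ε*a1*x2*x3 + ε^2*a1*a3*x1*x2^2 + ε^2*a1*a2*x1*x3^2) = 0 := by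
    linear_combination (1 - ε^2*a2*a3*x1^2) * h1 + (ε*a1*x3 + ε^2*a1*a3*x1*x2) * h2 + (ε*a1*x2 + ε^2*a1*a2*x1*x3) * h3
  have hR2 : (1 - ε^2*(a2*a3*x1^2 + a3*a1*x2^2 + a1*a2*x3^2) - 2*ε^3*a1*a2*a3*x1*x2*x3) * xt2 - (x2 - ε^2*a3*a1*x2^3 + 2*ε*a2*x3*x1 + ε^2*a2*a1*x2*x3^2 + ε^2*a2*a3*x2*x1^2) = 0 := by
    linear_combination (ε*a2*x3 + ε^2*a2*a3*x1*x2) * h1 + (1 - ε^2*a3*a1*x2^2) * h2 + (ε*a2*x1 + ε^2*a2*a1*x2*x3) * h3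
  have hR3 : (1 - ε^2*(a2*a3*x1^2 + a3*a1*x2^2 + a1*a2*x3^2) - 2*ε^3*a1*a2*a3*x1*x2*x3) * xt3 - (x3 - ε^2*a1*a2*x3^3 + 2*ε*a3*x1*x2 + ε^2*a3*a2*x3*x1^2 + ε^2*a3*a1*x3*x2^2) = 0 := by
    linear_combination (ε*a3*x2 + ε^2*a3*a2*x1*x3) * h1 + (ε*a3*x1 + ε^2*a3*a1*x2*x3) * h2 + (1 - ε^2*a1*a2*x3^2) * h3
  have hP : (1 - ε^2*(a2*a3*x1^2 + a3*a1*x2^2 + a1*a2*x3^2) - 2*ε^3*a1*a2*a3*x1*x2*x3) ≠ 0 := by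
    intro h0
    have hQ0 : (x1 - ε^2*a2*a3*x1^3 + 2*ε*a1*x2*x3 + ε^2*a1*a3*x1*x2^2 + ε^2*a1*a2*x1*x3^2) = 0 := by
      linear_combination (-1 : ℝ) * hR1 + xt1 * h0
    have hD : (1 - ε ^ 2 * a2 * a3 * x1 ^ 2) * (1 - ε ^ 2 * a3 * a1 * x2 ^ 2) * (1 - ε ^ 2 * a1 * a2 * x3 ^ 2) = 0 := by
      linear_combination (1 - (1/2)*ε^2*a2*a3*x1^2 + (1/2)*ε^3*a1*a2*a3*x1*x2*x3) * h0 + ((1/2)*ε^2*a2*a3*x1 + (1/2)*ε^3*a1*a2*a3*x2*x3) * hQ0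
    exact mul_ne_zero (mul_ne_zero hd1 hd2) hd3 hD
  have k1 : (-(4*ε^2*a2*a3)*(x1^2*xt1^2)*(1 - ε^2*a3*a1*x2^2)*(1 - ε^2*a1*a2*x3^2) + ((1 - ε^2*a3*a1*x2^2)+ε^2*a2*(a3*x1^2 - a1*x3^2))*((1 - ε^2*a1*a2*x3^2)-ε^2*a3*(a1*x2^2 - a2*x1^2))*(x1^2+xt1^2) - 2*((1 - ε^2*a3*a1*x2^2)-ε^2*a2*(a3*x1^2 - a1*x3^2))*((1 - ε^2*a1*a2*x3^2)+ε^2*a3*(a1*x2^2 - a2*x1^2))*(x1*xt1) + 4*ε^2*(a3*x1^2 - a1*x3^2)*(a1*x2^2 - a2*x1^2)) * (1 - ε^2*(a2*a3*x1^2 + a3*a1*x2^2 + a1*a2*x3^2) - 2*ε^3*a1*a2*a3*x1*x2*x3)^2 = 0 := by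
    linear_combination ((-(4*ε^2*a2*a3)*x1^2*(1 - ε^2*a3*a1*x2^2)*(1 - ε^2*a1*a2*x3^2) + ((1 - ε^2*a3*a1*x2^2)+ε^2*a2*(a3*x1^2 - a1*x3^2))*((1 - ε^2*a1*a2*x3^2)-ε^2*a3*(a1*x2^2 - a2*x1^2)))*((1 - ε^2*(a2*a3*x1^2 + a3*a1*x2^2 + a1*a2*x3^2) - 2*ε^3*a1*a2*a3*x1*x2*x3)*xt1 + (x1 - ε^2*a2*a3*x1^3 + 2*ε*a1*x2*x3 + ε^2*a1*a3*x1*x2^2 + ε^2*a1*a2*x1*x3^2)) + (-2*((1 - ε^2*a3*a1*x2^2)-ε^2*a2*(a3*x1^2 - a1*x3^2))*((1 - ε^2*a1*a2*x3^2)+ε^2*a3*(a1*x2^2 - a2*x1^2))*x1)*(1 - ε^2*(a2*a3*x1^2 + a3*a1*x2^2 + a1*a2*x3^2) - 2*ε^3*a1*a2*a3*x1*x2*x3)) * hR1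
  have key1 : (-(4*ε^2*a2*a3)*(x1^2*xt1^2)*(1 - ε^2*a3*a1*x2^2)*(1 - ε^2*a1*a2*x3^2) + ((1 - ε^2*a3*a1*x2^2)+ε^2*a2*(a3*x1^2 - a1*x3^2))*((1 - ε^2*a1*a2*x3^2)-ε^2*a3*(a1*x2^2 - a2*x1^2))*(x1^2+xt1^2) - 2*((1 - ε^2*a3*a1*x2^2)-ε^2*a2*(a3*x1^2 - a1*x3^2))*((1 - ε^2*a1*a2*x3^2)+ε^2*a3*(a1*x2^2 - a2*x1^2))*(x1*xt1) + 4*ε^2*(a3*x1^2 - a1*x3^2)*(a1*x2^2 - a2*x1^2)) = 0 :=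
    (mul_eq_zero.mp k1).resolve_right (pow_ne_zero 2 hP)
  have k2 : (-(4*ε^2*a3*a1)*(x2^2*xt2^2)*(1 - ε^2*a1*a2*x3^2)*(1 - ε^2*a2*a3*x1^2) + ((1 - ε^2*a1*a2*x3^2)+ε^2*a3*(a1*x2^2 - a2*x1^2))*((1 - ε^2*a2*a3*x1^2)-ε^2*a1*(a2*x3^2 - a3*x2^2))*(x2^2+xt2^2) - 2*((1 - ε^2*a1*a2*x3^2)-ε^2*a3*(a1*x2^2 - a2*x1^2))*((1 - ε^2*a2*a3*x1^2)+ε^2*a1*(a2*x3^2 - a3*x2^2))*(x2*xt2) + 4*ε^2*(a1*x2^2 - a2*x1^2)*(a2*x3^2 - a3*x2^2)) * (1 - ε^2*(a2*a3*x1^2 + a3*a1*x2^2 + a1*a2*x3^2) - 2*ε^3*a1*a2*a3*x1*x2*x3)^2 = 0 := by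
    linear_combination ((-(4*ε^2*a3*a1)*x2^2*(1 - ε^2*a1*a2*x3^2)*(1 - ε^2*a2*a3*x1^2) + ((1 - ε^2*a1*a2*x3^2)+ε^2*a3*(a1*x2^2 - a2*x1^2))*((1 - ε^2*a2*a3*x1^2)-ε^2*a1*(a2*x3^2 - a3*x2^2)))*((1 - ε^2*(a2*a3*x1^2 + a3*a1*x2^2 + a1*a2*x3^2) - 2*ε^3*a1*a2*a3*x1*x2*x3)*xt2 + (x2 - ε^2*a3*a1*x2^3 + 2*ε*a2*x3*x1 + ε^2*a2*a1*x2*x3^2 + ε^2*a2*a3*x2*x1^2)) + (-2*((1 - ε^2*a1*a2*x3^2)-ε^2*a3*(a1*x2^2 - a2*x1^2))*((1 - ε^2*a2*a3*x1^2)+ε^2*a1*(a2*x3^2 - a3*x2^2))*x2)*(1 - ε^2*(a2*a3*x1^2 + a3*a1*x2^2 + a1*a2*x3^2) - 2*ε^3*a1*a2*a3*x1*x2*x3)) * hR2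
  have key2 : (-(4*ε^2*a3*a1)*(x2^2*xt2^2)*(1 - ε^2*a1*a2*x3^2)*(1 - ε^2*a2*a3*x1^2) + ((1 - ε^2*a1*a2*x3^2)+ε^2*a3*(a1*x2^2 - a2*x1^2))*((1 - ε^2*a2*a3*x1^2)-ε^2*a1*(a2*x3^2 - a3*x2^2))*(x2^2+xt2^2) - 2*((1 - ε^2*a1*a2*x3^2)-ε^2*a3*(a1*x2^2 - a2*x1^2))*((1 - ε^2*a2*a3*x1^2)+ε^2*a1*(a2*x3^2 - a3*x2^2))*(x2*xt2) + 4*ε^2*(a1*x2^2 - a2*x1^2)*(a2*x3^2 - a3*x2^2)) = 0 :=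
    (mul_eq_zero.mp k2).resolve_right (pow_ne_zero 2 hP)
  have k3 : (-(4*ε^2*a1*a2)*(x3^2*xt3^2)*(1 - ε^2*a2*a3*x1^2)*(1 - ε^2*a3*a1*x2^2) + ((1 - ε^2*a2*a3*x1^2)+ε^2*a1*(a2*x3^2 - a3*x2^2))*((1 - ε^2*a3*a1*x2^2)-ε^2*a2*(a3*x1^2 - a1*x3^2))*(x3^2+xt3^2) - 2*((1 - ε^2*a2*a3*x1^2)-ε^2*a1*(a2*x3^2 - a3*x2^2))*((1 - ε^2*a3*a1*x2^2)+ε^2*a2*(a3*x1^2 - a1*x3^2))*(x3*xt3) + 4*ε^2*(a2*x3^2 - a3*x2^2)*(a3*x1^2 - a1*x3^2)) * (1 - ε^2*(a2*a3*x1^2 + a3*a1*x2^2 + a1*a2*x3^2) - 2*ε^3*a1*a2*a3*x1*x2*x3)^2 = 0 := by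
    linear_combination ((-(4*ε^2*a1*a2)*x3^2*(1 - ε^2*a2*a3*x1^2)*(1 - ε^2*a3*a1*x2^2) + ((1 - ε^2*a2*a3*x1^2)+ε^2*a1*(a2*x3^2 - a3*x2^2))*((1 - ε^2*a3*a1*x2^2)-ε^2*a2*(a3*x1^2 - a1*x3^2)))*((1 - ε^2*(a2*a3*x1^2 + a3*a1*x2^2 + a1*a2*x3^2) - 2*ε^3*a1*a2*a3*x1*x2*x3)*xt3 + (x3 - ε^2*a1*a2*x3^3 + 2*ε*a3*x1*x2 + ε^2*a3*a2*x3*x1^2 + ε^2*a3*a1*x3*x2^2)) + (-2*((1 - ε^2*a2*a3*x1^2)-ε^2*a1*(a2*x3^2 - a3*x2^2))*((1 - ε^2*a3*a1*x2^2)+ε^2*a2*(a3*x1^2 - a1*x3^2))*x3)*(1 - ε^2*(a2*a3*x1^2 + a3*a1*x2^2 + a1*a2*x3^2) - 2*ε^3*a1*a2*a3*x1*x2*x3)) * hR3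
  have key3 : (-(4*ε^2*a1*a2)*(x3^2*xt3^2)*(1 - ε^2*a2*a3*x1^2)*(1 - ε^2*a3*a1*x2^2) + ((1 - ε^2*a2*a3*x1^2)+ε^2*a1*(a2*x3^2 - a3*x2^2))*((1 - ε^2*a3*a1*x2^2)-ε^2*a2*(a3*x1^2 - a1*x3^2))*(x3^2+xt3^2) - 2*((1 - ε^2*a2*a3*x1^2)-ε^2*a1*(a2*x3^2 - a3*x2^2))*((1 - ε^2*a3*a1*x2^2)+ε^2*a2*(a3*x1^2 - a1*x3^2))*(x3*xt3) + 4*ε^2*(a2*x3^2 - a3*x2^2)*(a3*x1^2 - a1*x3^2)) = 0 :=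
    (mul_eq_zero.mp k3).resolve_right (pow_ne_zero 2 hP)
  subst hH1 hH2 hH3
  refine ⟨?_, ?_, ?_⟩
  · have hgoal : -(4 * ε ^ 2 * a2 * a3) * (x1 ^ 2 * xt1 ^ 2)
      + (1 + ε ^ 2 * a2 * ((a3 * x1 ^ 2 - a1 * x3 ^ 2) / (1 - ε ^ 2 * a3 * a1 * x2 ^ 2)))
        * (1 - ε ^ 2 * a3 * ((a1 * x2 ^ 2 - a2 * x1 ^ 2) / (1 - ε ^ 2 * a1 * a2 * x3 ^ 2))) * (x1 ^ 2 + xt1 ^ 2)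
      - 2 * (1 - ε ^ 2 * a2 * ((a3 * x1 ^ 2 - a1 * x3 ^ 2) / (1 - ε ^ 2 * a3 * a1 * x2 ^ 2)))
        * (1 + ε ^ 2 * a3 * ((a1 * x2 ^ 2 - a2 * x1 ^ 2) / (1 - ε ^ 2 * a1 * a2 * x3 ^ 2))) * (x1 * xt1)
      + 4 * ε ^ 2 * ((a3 * x1 ^ 2 - a1 * x3 ^ 2) / (1 - ε ^ 2 * a3 * a1 * x2 ^ 2))
        * ((a1 * x2 ^ 2 - a2 * x1 ^ 2) / (1 - ε ^ 2 * a1 * a2 * x3 ^ 2))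
      = (-(4*ε^2*a2*a3)*(x1^2*xt1^2)*(1 - ε^2*a3*a1*x2^2)*(1 - ε^2*a1*a2*x3^2) + ((1 - ε^2*a3*a1*x2^2)+ε^2*a2*(a3*x1^2 - a1*x3^2))*((1 - ε^2*a1*a2*x3^2)-ε^2*a3*(a1*x2^2 - a2*x1^2))*(x1^2+xt1^2) - 2*((1 - ε^2*a3*a1*x2^2)-ε^2*a2*(a3*x1^2 - a1*x3^2))*((1 - ε^2*a1*a2*x3^2)+ε^2*a3*(a1*x2^2 - a2*x1^2))*(x1*xt1) + 4*ε^2*(a3*x1^2 - a1*x3^2)*(a1*x2^2 - a2*x1^2)) / ((1 - ε^2*a3*a1*x2^2) * (1 - ε^2*a1*a2*x3^2)) := by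
      generalize hA : 1 - ε ^ 2 * a3 * a1 * x2 ^ 2 = A at hd2 ⊢
      generalize hB : 1 - ε ^ 2 * a1 * a2 * x3 ^ 2 = B at hd3 ⊢
      field_simp
    rw [hgoal, key1, zero_div]
  · have hgoal : -(4 * ε ^ 2 * a3 * a1) * (x2 ^ 2 * xt2 ^ 2)
      + (1 + ε ^ 2 * a3 * ((a1 * x2 ^ 2 - a2 * x1 ^ 2) / (1 - ε ^ 2 * a1 * a2 * x3 ^ 2)))
        * (1 - ε ^ 2 * a1 * ((a2 * x3 ^ 2 - a3 * x2 ^ 2) / (1 - ε ^ 2 * a2 * a3 * x1 ^ 2))) * (x2 ^ 2 + xt2 ^ 2)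
      - 2 * (1 - ε ^ 2 * a3 * ((a1 * x2 ^ 2 - a2 * x1 ^ 2) / (1 - ε ^ 2 * a1 * a2 * x3 ^ 2)))
        * (1 + ε ^ 2 * a1 * ((a2 * x3 ^ 2 - a3 * x2 ^ 2) / (1 - ε ^ 2 * a2 * a3 * x1 ^ 2))) * (x2 * xt2)
      + 4 * ε ^ 2 * ((a1 * x2 ^ 2 - a2 * x1 ^ 2) / (1 - ε ^ 2 * a1 * a2 * x3 ^ 2))
        * ((a2 * x3 ^ 2 - a3 * x2 ^ 2) / (1 - ε ^ 2 * a2 * a3 * x1 ^ 2))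
      = (-(4*ε^2*a3*a1)*(x2^2*xt2^2)*(1 - ε^2*a1*a2*x3^2)*(1 - ε^2*a2*a3*x1^2) + ((1 - ε^2*a1*a2*x3^2)+ε^2*a3*(a1*x2^2 - a2*x1^2))*((1 - ε^2*a2*a3*x1^2)-ε^2*a1*(a2*x3^2 - a3*x2^2))*(x2^2+xt2^2) - 2*((1 - ε^2*a1*a2*x3^2)-ε^2*a3*(a1*x2^2 - a2*x1^2))*((1 - ε^2*a2*a3*x1^2)+ε^2*a1*(a2*x3^2 - a3*x2^2))*(x2*xt2) + 4*ε^2*(a1*x2^2 - a2*x1^2)*(a2*x3^2 - a3*x2^2)) / ((1 - ε^2*a1*a2*x3^2) * (1 - ε^2*a2*a3*x1^2)) := by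
      generalize hA : 1 - ε ^ 2 * a1 * a2 * x3 ^ 2 = A at hd3 ⊢
      generalize hB : 1 - ε ^ 2 * a2 * a3 * x1 ^ 2 = B at hd1 ⊢
      field_simp
    rw [hgoal, key2, zero_div]
  · have hgoal : -(4 * ε ^ 2 * a1 * a2) * (x3 ^ 2 * xt3 ^ 2)
      + (1 + ε ^ 2 * a1 * ((a2 * x3 ^ 2 - a3 * x2 ^ 2) / (1 - ε ^ 2 * a2 * a3 * x1 ^ 2)))
        * (1 - ε ^ 2 * a2 * ((a3 * x1 ^ 2 - a1 * x3 ^ 2) / (1 - ε ^ 2 * a3 * a1 * x2 ^ 2))) * (x3 ^ 2 + xt3 ^ 2)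
      - 2 * (1 - ε ^ 2 * a1 * ((a2 * x3 ^ 2 - a3 * x2 ^ 2) / (1 - ε ^ 2 * a2 * a3 * x1 ^ 2)))
        * (1 + ε ^ 2 * a2 * ((a3 * x1 ^ 2 - a1 * x3 ^ 2) / (1 - ε ^ 2 * a3 * a1 * x2 ^ 2))) * (x3 * xt3)
      + 4 * ε ^ 2 * ((a2 * x3 ^ 2 - a3 * x2 ^ 2) / (1 - ε ^ 2 * a2 * a3 * x1 ^ 2))
        * ((a3 * x1 ^ 2 - a1 * x3 ^ 2) / (1 - ε ^ 2 * a3 * a1 * x2 ^ 2))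
      = (-(4*ε^2*a1*a2)*(x3^2*xt3^2)*(1 - ε^2*a2*a3*x1^2)*(1 - ε^2*a3*a1*x2^2) + ((1 - ε^2*a2*a3*x1^2)+ε^2*a1*(a2*x3^2 - a3*x2^2))*((1 - ε^2*a3*a1*x2^2)-ε^2*a2*(a3*x1^2 - a1*x3^2))*(x3^2+xt3^2) - 2*((1 - ε^2*a2*a3*x1^2)-ε^2*a1*(a2*x3^2 - a3*x2^2))*((1 - ε^2*a3*a1*x2^2)+ε^2*a2*(a3*x1^2 - a1*x3^2))*(x3*xt3) + 4*ε^2*(a2*x3^2 - a3*x2^2)*(a3*x1^2 - a1*x3^2)) / ((1 - ε^2*a2*a3*x1^2) * (1 - ε^2*a3*a1*x2^2)) := by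
      generalize hA : 1 - ε ^ 2 * a2 * a3 * x1 ^ 2 = A at hd1 ⊢
      generalize hB : 1 - ε ^ 2 * a3 * a1 * x2 ^ 2 = B at hd2 ⊢
      field_simp
    rw [hgoal, key3, zero_div]
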